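/- Utilitarian PoC lower bound for paths with n agents: let G be a path on m = cn + d vertices (c ≥ 1, 0 ≤ d ≤ n−1). In the instance where the vertices are positively valued by agents in the cyclically repeating order 1,2,...,n (so agents 1,...,d each value c+1 vertices at 1/(c+1) each and agents d+1,...,n each value c vertices at 1/c each), the unconstrained optimal utilitarian welfare is n, while every connected allocation allocates at most n + c − 1 items to agents who value them and thus has utilitarian welfare at most (n + c − 1)/c. Hence the utilitarian PoC of the path is at least nc/(n + c − 1). -/

import Mathlib

def ConnB {V : Type*} (G : SimpleGraph V) (s : Finset V) : Prop :=
  s = ∅ ∨ (G.induce (s : Set V)).Connected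

def IsAlloc {V : Type*} [Fintype V] [DecidableEq V] {n : ℕ} (A : Fin n → Finset V) : Prop :=
  (∀ i j : Fin n, i ≠ j → Disjoint (A i) (A j)) ∧ Finset.univ.biUnion A = Finset.univ

/-- The path on `m` vertices `0 — 1 — ⋯ — (m-1)`. -/
def pathGraph (m : ℕ) : SimpleGraph (Fin m) where
  Adj x y := x.val + 1 = y.val ∨ y.val + 1 = x.val
  symm := ⟨by rintro x y (h | h); exacts [Or.inr h, Or.inl h]⟩
  loopless := ⟨by rintro x (h | h) <;> omega⟩

lemma walk_mem {m : ℕ} {s : Set (Fin m)} {a b : ↥s}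
    (w : ((pathGraph m).induce s).Walk a b) :
    ∀ x : Fin m, (a : Fin m).val ≤ x.val → x.val ≤ (b : Fin m).val → x ∈ s := by
  induction w with
  | nil =>
    intro x h1 h2
    have hx : x = (_ : ↥s) := Fin.ext (le_antisymm h2 h1)
    exact hx ▸ Subtype.coe_prop _
  | @cons a a' b h w ih =>
    intro x h1 h2
    have h' : (a : Fin m).val + 1 = (a' : Fin m).val ∨ (a' : Fin m).val + 1 = (a : Fin m).val := by
      simpa [pathGraph] using h
    rcases h' with h' | h'
    · by_cases hx : (a' : Fin m).val ≤ x.val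
      · exact ih x hx h2
      · have : x = (a : Fin m) := Fin.ext (by omega)
        exact this ▸ a.2
    · exact ih x (by omega) h2

lemma conn_interval {m : ℕ} {s : Finset (Fin m)} (hs : ConnB (pathGraph m) s)
    {a b x : Fin m} (ha : a ∈ s) (hb : b ∈ s) (h1 : a.val ≤ x.val) (h2 : x.val ≤ b.val) :
    x ∈ s := by
  rcases hs with h | h
  · simp [h] at ha
  · obtain ⟨w⟩ := h.preconnected ⟨a, by simpa using ha⟩ ⟨b, by simpa using hb⟩
    have := walk_mem w x h1 h2
    simpa using this

lemma count_bound {m n : ℕ} (hn : 1 ≤ n) {s : Finset (Fin m)} (hs : ConnB (pathGraph m) s)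
    (i : ℕ) :
    n * (s.filter (fun v => v.val % n = i)).card ≤ s.card + n - 1 := by
  set t := s.filter (fun v => v.val % n = i) with ht
  rcases t.eq_empty_or_nonempty with h | h
  · simp [h]
  · set a := t.min' h with hadef
    set b := t.max' h with hbdef
    have hat : a ∈ t := t.min'_mem h
    have hbt : b ∈ t := t.max'_mem h
    have has : a ∈ s := (Finset.mem_filter.1 hat).1
    have hbs : b ∈ s := (Finset.mem_filter.1 hbt).1
    have hai : a.val % n = i := (Finset.mem_filter.1 hat).2
    have hbi : b.val % n = i := (Finset.mem_filter.1 hbt).2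
    have hab : a ≤ b := t.min'_le b hbt
    have hIcc : Finset.Icc a b ⊆ s := by
      intro x hx
      rw [Finset.mem_Icc] at hx
      exact conn_interval hs has hbs hx.1 hx.2
    have hcard : b.val + 1 - a.val ≤ s.card := by
      calc b.val + 1 - a.val = (Finset.Icc a b).card := by rw [Fin.card_Icc]
        _ ≤ s.card := Finset.card_le_card hIcc
    have hinj : t.card ≤ (Finset.Icc (a.val / n) (b.val / n)).card := by
      apply Finset.card_le_card_of_injOn (fun v => v.val / n)
      · intro v hv
        have hva : a ≤ v := t.min'_le v hv
        have hvb : v ≤ b := t.le_max' v hv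
        rw [Finset.mem_coe, Finset.mem_Icc]
        exact ⟨Nat.div_le_div_right hva, Nat.div_le_div_right hvb⟩
      · intro v1 hv1 v2 hv2 heq
        rw [Finset.mem_coe] at hv1 hv2
        have r1 : v1.val % n = i := (Finset.mem_filter.1 hv1).2
        have r2 : v2.val % n = i := (Finset.mem_filter.1 hv2).2
        have e1 := Nat.div_add_mod v1.val n
        have e2 := Nat.div_add_mod v2.val n
        simp only at heq
        rw [heq] at e1
        apply Fin.ext
        omega
    rw [Nat.card_Icc] at hinj
    have hq : a.val / n ≤ b.val / n := Nat.div_le_div_right hab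
    have hk : t.card + a.val / n ≤ b.val / n + 1 := by omega
    have hmul := Nat.mul_le_mul_left n hk
    rw [Nat.mul_add, Nat.mul_add] at hmul
    have e1 := Nat.div_add_mod a.val n
    have e2 := Nat.div_add_mod b.val n
    have hab' : a.val ≤ b.val := hab
    omega

lemma card_residue (n c d m : ℕ) (hn : 1 ≤ n) (hd : d ≤ n - 1) (hm : m = c * n + d)
    (hc : 1 ≤ c) (i : Fin n) :
    (Finset.univ.filter (fun v : Fin m => v.val % n = i.val)).card
      = if i.val < d then c + 1 else c := by
  have hnc : n ≤ c * n := Nat.le_mul_of_pos_left n hc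
  have hin : i.val < n := i.2
  have him : i.val < m := by omega
  set q := if i.val < d then c + 1 else c with hq
  have key : ∀ j, j < q → j * n + i.val < m := by
    intro j hj
    have h1 := Nat.mul_le_mul_right n (by omega : j + 1 ≤ q)
    have e1 : (j + 1) * n = j * n + n := by ring
    rw [hq] at h1
    split at h1
    · have e2 : (c + 1) * n = c * n + n := by ring
      omega
    · omega
  rw [← Finset.card_range q]
  apply Finset.card_nbij' (i := fun v : Fin m => v.val / n)
      (j := fun j : ℕ => if h : j * n + i.val < m then (⟨j * n + i.val, h⟩ : Fin m)
        else ⟨i.val, him⟩)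
  · intro v hv
    simp only [Finset.mem_coe] at hv ⊢
    rw [Finset.mem_filter] at hv
    have hr := hv.2
    have e := Nat.div_add_mod v.val n
    have comm : (v.val / n) * n = n * (v.val / n) := Nat.mul_comm _ _
    have hvm := v.2
    rw [Finset.mem_range]
    by_contra hcon
    push_neg at hcon
    have h2 : q * n ≤ (v.val / n) * n := Nat.mul_le_mul_right n hcon
    rw [hq] at h2
    split at h2
    · have e2 : (c + 1) * n = c * n + n := by ring
      omega
    · omega
  · intro j hj
    simp only [Finset.mem_coe] at hj ⊢
    rw [Finset.mem_range] at hj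
    rw [dif_pos (key j hj), Finset.mem_filter]
    refine ⟨Finset.mem_univ _, ?_⟩
    simp only
    rw [Nat.mul_comm j n, Nat.mul_add_mod, Nat.mod_eq_of_lt hin]
  · intro v hv
    simp only [Finset.mem_coe] at hv ⊢
    rw [Finset.mem_filter] at hv
    have hr := hv.2
    have e := Nat.div_add_mod v.val n
    have comm : (v.val / n) * n = n * (v.val / n) := Nat.mul_comm _ _
    have hvm : v.val / n * n + i.val < m := by omega
    rw [dif_pos hvm]
    apply Fin.ext
    simp only
    omega
  · intro j hj
    simp only [Finset.mem_coe] at hj ⊢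
    rw [Finset.mem_range] at hj
    rw [dif_pos (key j hj)]
    simp only
    rw [Nat.mul_comm j n, Nat.mul_add_div (by omega : 0 < n), Nat.div_eq_of_lt hin]
    omega

theorem util_poc_path_lower (n c d m : ℕ) (hn : 2 ≤ n) (hc : 1 ≤ c) (hd : d ≤ n - 1)
    (hm : m = c * n + d)
    (u : Fin n → Fin m → ℝ)
    (hu : ∀ (i : Fin n) (v : Fin m),
      u i v = if v.val % n = i.val
        then (if i.val < d then ((c : ℝ) + 1)⁻¹ else ((c : ℝ))⁻¹) else 0) :
    (∃ A : Fin n → Finset (Fin m), IsAlloc A ∧ ∑ i, ∑ v ∈ A i, u i v = n) ∧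
    (∀ B : Fin n → Finset (Fin m), IsAlloc B → (∀ i, ConnB (pathGraph m) (B i)) →
      ∑ i, ∑ v ∈ B i, u i v ≤ ((n : ℝ) + c - 1) / c) := by
  have hn1 : 1 ≤ n := by omega
  have hc0 : (0 : ℝ) < c := by exact_mod_cast hc
  constructor
  · -- Part 1
    refine ⟨fun i => Finset.univ.filter (fun v : Fin m => v.val % n = i.val), ⟨?_, ?_⟩, ?_⟩
    · intro i j hij
      rw [Finset.disjoint_left]
      intro v hv1 hv2
      rw [Finset.mem_filter] at hv1 hv2
      exact hij (Fin.ext (hv1.2 ▸ hv2.2))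
    · ext v
      simp only [Finset.mem_biUnion, Finset.mem_univ, Finset.mem_filter, true_and,
        iff_true]
      exact ⟨⟨v.val % n, Nat.mod_lt _ (by omega)⟩, rfl⟩
    · have hone : ∀ i : Fin n,
          ∑ v ∈ Finset.univ.filter (fun v : Fin m => v.val % n = i.val), u i v = 1 := by
        intro i
        have : ∀ v ∈ Finset.univ.filter (fun v : Fin m => v.val % n = i.val),
            u i v = (if i.val < d then ((c : ℝ) + 1)⁻¹ else ((c : ℝ))⁻¹) := by
          intro v hv
          rw [Finset.mem_filter] at hv
          rw [hu, if_pos hv.2]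
        rw [Finset.sum_congr rfl this, Finset.sum_const, nsmul_eq_mul,
          card_residue n c d m hn1 hd hm hc i]
        split
        · rw [Nat.cast_add, Nat.cast_one]
          field_simp
        · field_simp
      rw [Finset.sum_congr rfl (fun i _ => hone i), Finset.sum_const, nsmul_eq_mul,
        Finset.card_univ, Fintype.card_fin, mul_one]
  · -- Part 2
    intro B hB hconn
    set k : Fin n → ℕ := fun i => ((B i).filter (fun v => v.val % n = i.val)).card with hk
    -- sum of cards
    have hcards : ∑ i, (B i).card = m := by
      rw [← Finset.card_biUnion (fun i _ j _ hij => hB.1 i j hij), hB.2,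
        Finset.card_univ, Fintype.card_fin]
    -- per agent count bound
    have hcount : ∀ i : Fin n, n * k i ≤ (B i).card + n - 1 :=
      fun i => count_bound hn1 (hconn i) i.val
    -- total count bound
    have hS : ∑ i, k i ≤ n + c - 1 := by
      by_contra hcon
      push_neg at hcon
      have hS' : n + c ≤ ∑ i, k i := by omega
      have h1 : n * (n + c) ≤ n * ∑ i, k i := Nat.mul_le_mul_left n hS'
      have h2 : n * ∑ i, k i = ∑ i, n * k i := Finset.mul_sum _ _ _
      have h3 : ∑ i, n * k i ≤ ∑ i, ((B i).card + (n - 1)) := by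
        apply Finset.sum_le_sum
        intro i _
        have := hcount i
        omega
      have h4 : ∑ i, ((B i).card + (n - 1)) = m + n * (n - 1) := by
        rw [Finset.sum_add_distrib, hcards, Finset.sum_const, Finset.card_univ,
          Fintype.card_fin, smul_eq_mul]
      have e1 : n * (n + c) = n * n + n * c := by ring
      have e2 : n * (n - 1) + n * 1 = n * n := by
        rw [← Nat.mul_add]
        congr 1
        omega
      have e3 : n * c = c * n := Nat.mul_comm n c
      omega
    -- per agent welfare
    have hwel : ∀ i : Fin n, ∑ v ∈ B i, u i v
        = (k i : ℝ) * (if i.val < d then ((c : ℝ) + 1)⁻¹ else ((c : ℝ))⁻¹) := by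
      intro i
      simp only [hu]
      rw [← Finset.sum_filter, Finset.sum_const, nsmul_eq_mul]
    have hval : ∀ i : Fin n,
        (if i.val < d then ((c : ℝ) + 1)⁻¹ else ((c : ℝ))⁻¹) ≤ ((c : ℝ))⁻¹ := by
      intro i
      split
      · apply inv_anti₀ hc0
        linarith
      · exact le_refl _
    calc ∑ i, ∑ v ∈ B i, u i v
        = ∑ i, (k i : ℝ) * (if i.val < d then ((c : ℝ) + 1)⁻¹ else ((c : ℝ))⁻¹) :=
          Finset.sum_congr rfl (fun i _ => hwel i)
      _ ≤ ∑ i, (k i : ℝ) * ((c : ℝ))⁻¹ := by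
          apply Finset.sum_le_sum
          intro i _
          exact mul_le_mul_of_nonneg_left (hval i) (Nat.cast_nonneg _)
      _ = ((∑ i, k i : ℕ) : ℝ) * ((c : ℝ))⁻¹ := by
          rw [← Finset.sum_mul, Nat.cast_sum]
      _ ≤ ((n : ℝ) + c - 1) * ((c : ℝ))⁻¹ := by
          apply mul_le_mul_of_nonneg_right _ (by positivity)
          have : ((∑ i, k i : ℕ) : ℝ) ≤ ((n + c - 1 : ℕ) : ℝ) := by exact_mod_cast hS
          calc ((∑ i, k i : ℕ) : ℝ) ≤ ((n + c - 1 : ℕ) : ℝ) := this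
            _ = (n : ℝ) + c - 1 := by
              have : n + c - 1 = n + (c - 1) := by omega
              rw [this]
              push_cast [Nat.cast_sub hc]
              ring
      _ = ((n : ℝ) + c - 1) / c := by rw [div_eq_mul_inv]
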